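/- Let K be a field equipped with a nonarchimedean absolute value |·| and let k ⊆ K be a subfield such that |c| = 1 for every nonzero c ∈ k. Let d ≥ 2 be an integer, let m be an integer with 0 ≤ m ≤ d − 2, and let f(X) = X^d + a_{d−2}X^{d−2} + ⋯ + a_1X + a_0 ∈ K[X] be such that a_i ∈ k for every i > m and |a_j| > 1 for some j ≤ m. Then at most m elements x ∈ k are preperiodic under the map x ↦ f(x). (The consequence of Lemma 5.3 of the paper that is used in the proofs of Theorems 2.1 and 2.2: at most m constants have bounded orbit, hence at most m constants can be preperiodic.) -/

import Mathlib

section Aux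

variable {K : Type*} [Field K] (v : AbsoluteValue K ℝ)

private lemma na_sub (hna : ∀ x y : K, v (x + y) ≤ max (v x) (v y)) (x y : K) :
    v (x - y) ≤ max (v x) (v y) := by
  have := hna x (-y)
  rwa [← sub_eq_add_neg, v.map_neg] at this

private lemma na_dom (hna : ∀ x y : K, v (x + y) ≤ max (v x) (v y)) {x y : K}
    (h : v y < v x) : v (x + y) = v x := by
  have h1 : v (x + y) ≤ v x := (hna x y).trans (max_le le_rfl h.le)
  refine le_antisymm h1 ?_
  have h2 := hna (x + y) (-y)
  rw [add_neg_cancel_right, v.map_neg] at h2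
  rcases le_max_iff.mp h2 with h3 | h3
  · exact h3
  · exact absurd h3 (not_le.mpr h)

private lemma na_sum (hna : ∀ x y : K, v (x + y) ≤ max (v x) (v y))
    {ι : Type*} (s : Finset ι) (F : ι → K) {t : ℝ} (ht : 0 ≤ t)
    (h : ∀ i ∈ s, v (F i) ≤ t) : v (∑ i ∈ s, F i) ≤ t := by
  classical
  revert h
  induction s using Finset.cons_induction with
  | empty => intro _; simpa using ht
  | cons a s ha ih =>
    intro h
    rw [Finset.sum_cons]
    exact (hna _ _).trans (max_le (h a (Finset.mem_cons_self a s))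
      (ih fun i hi => h i (Finset.mem_cons_of_mem hi)))

private lemma sum_swap' {M : Type*} [AddCommMonoid M] (N : ℕ) (F : ℕ → ℕ → M) :
    ∑ i ∈ Finset.range N, ∑ l ∈ Finset.range i, F i l
      = ∑ l ∈ Finset.range N, ∑ i ∈ Finset.Ico (l + 1) N, F i l := by
  induction N with
  | zero => simp
  | succ N ih =>
    rw [Finset.sum_range_succ, ih, ← Finset.sum_add_distrib,
      Finset.sum_range_succ (f := fun l => ∑ i ∈ Finset.Ico (l + 1) (N + 1), F i l),
      Finset.Ico_self, Finset.sum_empty, add_zero]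
    refine Finset.sum_congr rfl fun l hl => ?_
    exact (Finset.sum_Ico_succ_top (Nat.succ_le_of_lt (Finset.mem_range.mp hl)) _).symm

private lemma interp (hna : ∀ x y : K, v (x + y) ≤ max (v x) (v y))
    (k : Subfield K) (hk : ∀ c ∈ k, c ≠ 0 → v c = 1) :
    ∀ (M : ℕ) (a : ℕ → K) (c : Fin (M + 1) → K), (∀ i, c i ∈ k) → Function.Injective c →
      ∀ t : ℝ, 1 ≤ t → (∀ i, v (∑ j ∈ Finset.range (M + 1), a j * c i ^ j) ≤ t) →
      ∀ j < M + 1, v (a j) ≤ t := by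
  intro M
  induction M with
  | zero =>
    intro a c hck hcinj t ht hval j hj
    obtain rfl : j = 0 := by omega
    simpa using hval 0
  | succ M ih =>
    intro a c hck hcinj t ht hval
    have hkle : ∀ x ∈ k, v x ≤ 1 := by
      intro x hx
      rcases eq_or_ne x 0 with rfl | h
      · simp
      · exact (hk x hx h).le
    set a' : ℕ → K := fun j => ∑ i ∈ Finset.Ico (j + 1) (M + 2), a i * (c 0) ^ (i - 1 - j)
      with ha'def
    have ha' : ∀ j, a' j = ∑ i ∈ Finset.Ico (j + 1) (M + 2), a i * (c 0) ^ (i - 1 - j) :=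
      fun j => rfl
    -- key identity
    have hkey : ∀ x : K,
        (∑ j ∈ Finset.range (M + 2), a j * x ^ j) - (∑ j ∈ Finset.range (M + 2), a j * (c 0) ^ j)
          = (x - c 0) * ∑ l ∈ Finset.range (M + 2), a' l * x ^ l := by
      intro x
      rw [← Finset.sum_sub_distrib]
      have h1 : ∀ j ∈ Finset.range (M + 2),
          a j * x ^ j - a j * (c 0) ^ j
            = ∑ l ∈ Finset.range j, (x - c 0) * (a j * x ^ l * (c 0) ^ (j - 1 - l)) := by
        intro j _
        rw [← mul_sub, ← geom_sum₂_mul x (c 0) j, Finset.sum_mul, Finset.mul_sum]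
        exact Finset.sum_congr rfl fun l _ => by ring
      rw [Finset.sum_congr rfl h1,
        sum_swap' (M + 2) (fun j l => (x - c 0) * (a j * x ^ l * (c 0) ^ (j - 1 - l))),
        Finset.mul_sum]
      refine Finset.sum_congr rfl fun l _ => ?_
      have h2 : a' l * x ^ l
          = ∑ i ∈ Finset.Ico (l + 1) (M + 2), a i * (c 0) ^ (i - 1 - l) * x ^ l := by
        rw [ha' l, Finset.sum_mul]
      rw [h2, Finset.mul_sum]
      exact Finset.sum_congr rfl fun i _ => by ring
    have hval' : ∀ i : Fin (M + 1), v (∑ j ∈ Finset.range (M + 1), a' j * (c i.succ) ^ j) ≤ t := by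
      intro i
      have hne : c i.succ - c 0 ≠ 0 := sub_ne_zero.mpr (hcinj.ne (Fin.succ_ne_zero i))
      have hv1 : v (c i.succ - c 0) = 1 := hk _ (Subfield.sub_mem k (hck _) (hck _)) hne
      have hsum22 : ∑ l ∈ Finset.range (M + 2), a' l * (c i.succ) ^ l
          = ∑ l ∈ Finset.range (M + 1), a' l * (c i.succ) ^ l := by
        rw [Finset.sum_range_succ]
        have hz : a' (M + 1) = 0 := by rw [ha']; simp
        rw [hz, zero_mul, add_zero]
      have e1 : v (∑ j ∈ Finset.range (M + 1), a' j * (c i.succ) ^ j)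
          = v ((∑ j ∈ Finset.range (M + 2), a j * (c i.succ) ^ j)
              - ∑ j ∈ Finset.range (M + 2), a j * (c 0) ^ j) := by
        rw [hkey (c i.succ), v.map_mul, hv1, one_mul, hsum22]
      rw [e1]
      exact (na_sub v hna _ _).trans (max_le (hval i.succ) (hval 0))
    have hIH := ih a' (fun i => c i.succ) (fun i => hck i.succ)
      (fun i j h => Fin.succ_injective _ (hcinj h)) t ht hval'
    have ha'le : ∀ l < M + 2, v (a' l) ≤ t := by
      intro l hl
      rcases Nat.lt_or_ge l (M + 1) with h | h
      · exact hIH l h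
      · have hl1 : l = M + 1 := by omega
        subst hl1
        have hz : a' (M + 1) = 0 := by rw [ha']; simp
        rw [hz]
        simpa using le_trans zero_le_one ht
    intro j hj
    rcases Nat.eq_zero_or_pos j with rfl | hjpos
    · have hrec : a 0 = (∑ j ∈ Finset.range (M + 2), a j * (c 0) ^ j) - c 0 * a' 0 := by
        rw [ha' 0, Finset.mul_sum]
        have h2 : ∑ i ∈ Finset.Ico (0 + 1) (M + 2), c 0 * (a i * (c 0) ^ (i - 1 - 0))
            = ∑ i ∈ Finset.Ico 1 (M + 2), a i * (c 0) ^ i := by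
          refine Finset.sum_congr (by norm_num) fun i hi => ?_
          have hi1 : 1 ≤ i := (Finset.mem_Ico.mp hi).1
          have he : i - 1 - 0 + 1 = i := by omega
          calc c 0 * (a i * (c 0) ^ (i - 1 - 0)) = a i * ((c 0) ^ (i - 1 - 0) * c 0) := by ring
            _ = a i * (c 0) ^ i := by rw [← pow_succ, he]
        rw [h2, Finset.range_eq_Ico, Finset.sum_eq_sum_Ico_succ_bot (by omega)]
        simp
      rw [hrec]
      refine (na_sub v hna _ _).trans (max_le (hval 0) ?_)
      rw [v.map_mul]
      calc v (c 0) * v (a' 0) ≤ 1 * t :=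
          mul_le_mul (hkle _ (hck 0)) (ha'le 0 (by omega)) (v.nonneg _) zero_le_one
        _ = t := one_mul t
    · obtain ⟨j', rfl⟩ : ∃ j', j = j' + 1 := ⟨j - 1, by omega⟩
      have hrec : a (j' + 1) = a' j' - c 0 * a' (j' + 1) := by
        rw [ha' j', ha' (j' + 1), Finset.mul_sum]
        have h2 : ∑ i ∈ Finset.Ico (j' + 1 + 1) (M + 2), c 0 * (a i * (c 0) ^ (i - 1 - (j' + 1)))
            = ∑ i ∈ Finset.Ico (j' + 2) (M + 2), a i * (c 0) ^ (i - 1 - j') := by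
          refine Finset.sum_congr (by norm_num) fun i hi => ?_
          have hi2 : j' + 2 ≤ i := (Finset.mem_Ico.mp hi).1
          have he : i - 1 - j' = (i - 1 - (j' + 1)) + 1 := by omega
          rw [he, pow_succ]; ring
        rw [h2, Finset.sum_eq_sum_Ico_succ_bot (show j' + 1 < M + 2 by omega)]
        have he0 : j' + 1 - 1 - j' = 0 := by omega
        rw [he0, pow_zero, mul_one]
        ring
      rw [hrec]
      refine (na_sub v hna _ _).trans (max_le (ha'le j' (by omega)) ?_)
      rw [v.map_mul]
      calc v (c 0) * v (a' (j' + 1)) ≤ 1 * t :=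
          mul_le_mul (hkle _ (hck 0)) (ha'le (j' + 1) (by omega)) (v.nonneg _) zero_le_one
        _ = t := one_mul t

end Aux

/-- Consequence of Lemma 5.3: with `f(y) = y^d + a_{d-2}y^{d-2} + ⋯ + a_0`, where the
`a_i` for `m < i ≤ d - 2` lie in a subfield `k` on which the nonarchimedean absolute value
is trivial, and `|a_j| > 1` for some `j ≤ m`, at most `m` elements of `k` are preperiodic
under `f`. -/
theorem stmt_11 {K : Type*} [Field K] (v : AbsoluteValue K ℝ)
    (hna : ∀ x y : K, v (x + y) ≤ max (v x) (v y))
    (k : Subfield K) (hk : ∀ c ∈ k, c ≠ 0 → v c = 1)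
    (d : ℕ) (hd : 2 ≤ d) (m : ℕ) (hm : m ≤ d - 2)
    (a : ℕ → K) (hak : ∀ i, m < i → i ≤ d - 2 → a i ∈ k)
    (hbig : ∃ j ≤ m, 1 < v (a j))
    (f : K → K) (hf : ∀ y, f y = y ^ d + ∑ i ∈ Finset.range (d - 1), a i * y ^ i) :
    {x : K | x ∈ k ∧ ∃ m' n : ℕ, 1 ≤ n ∧ f^[m' + n] x = f^[m'] x}.Finite ∧
      {x : K | x ∈ k ∧ ∃ m' n : ℕ, 1 ≤ n ∧ f^[m' + n] x = f^[m'] x}.ncard ≤ m := by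
  classical
  obtain ⟨j₀, hj₀m, hj₀⟩ := hbig
  have hne : (Finset.range (m + 1)).Nonempty := ⟨0, by simp⟩
  set B : ℝ := (Finset.range (m + 1)).sup' hne (fun j => v (a j)) with hB
  obtain ⟨j₁, hj₁mem, hj₁⟩ := Finset.exists_mem_eq_sup' hne (fun j => v (a j))
  have hj₁m : j₁ < m + 1 := Finset.mem_range.mp hj₁mem
  have hB1 : 1 < B := lt_of_lt_of_le hj₀
    (Finset.le_sup' (fun j => v (a j)) (Finset.mem_range.mpr (by omega)))
  have hB0 : (0 : ℝ) < B := lt_trans one_pos hB1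
  have hBle : ∀ j ≤ m, v (a j) ≤ B := fun j hj =>
    Finset.le_sup' (fun j => v (a j)) (Finset.mem_range.mpr (by omega))
  have hkle : ∀ x ∈ k, v x ≤ 1 := by
    intro x hx
    rcases eq_or_ne x 0 with rfl | h
    · simp
    · exact (hk x hx h).le
  have hBall : ∀ i < d - 1, v (a i) ≤ B := by
    intro i hi
    rcases le_or_gt i m with h | h
    · exact hBle i h
    · exact (hkle _ (hak i h (by omega))).trans hB1.le
  -- escape step
  have hstep : ∀ y : K, B ≤ v y → B * v y ≤ v (f y) := by
    intro y hy
    have hy1 : 1 < v y := lt_of_lt_of_le hB1 hy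
    have hy0 : (0 : ℝ) < v y := lt_trans one_pos hy1
    have hS : v (∑ i ∈ Finset.range (d - 1), a i * y ^ i) ≤ B * v y ^ (d - 2) := by
      refine na_sum v hna _ _ (by positivity) ?_
      intro i hi
      rw [v.map_mul, v.map_pow]
      have h1 : v (a i) ≤ B := hBall i (Finset.mem_range.mp hi)
      have h2 : v y ^ i ≤ v y ^ (d - 2) :=
        pow_le_pow_right₀ hy1.le (by have := Finset.mem_range.mp hi; omega)
      exact mul_le_mul h1 h2 (pow_nonneg (v.nonneg y) i) hB0.le
    have hBvy2 : B * v y ≤ v y ^ 2 := by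
      have := mul_le_mul_of_nonneg_right hy (v.nonneg y)
      calc B * v y ≤ v y * v y := this
        _ = v y ^ 2 := (sq (v y)).symm
    have hBvy2' : B < v y ^ 2 := by
      have h1 : B * 1 < B * v y := by
        exact mul_lt_mul_of_pos_left hy1 hB0
      calc B = B * 1 := (mul_one B).symm
        _ < B * v y := h1
        _ ≤ v y ^ 2 := hBvy2
    have hdd : v y ^ d = v y ^ 2 * v y ^ (d - 2) := by
      rw [← pow_add]; congr 1; omega
    have hlt : v (∑ i ∈ Finset.range (d - 1), a i * y ^ i) < v (y ^ d) := by
      rw [v.map_pow, hdd]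
      calc v (∑ i ∈ Finset.range (d - 1), a i * y ^ i) ≤ B * v y ^ (d - 2) := hS
        _ < v y ^ 2 * v y ^ (d - 2) := by
            exact mul_lt_mul_of_pos_right hBvy2' (by positivity)
    rw [hf y, na_dom v hna hlt, v.map_pow]
    calc B * v y ≤ v y ^ 2 := hBvy2
      _ ≤ v y ^ d := pow_le_pow_right₀ hy1.le (by omega)
  -- iteration
  have hiter : ∀ y : K, B ≤ v y → ∀ n : ℕ, B ^ n * v y ≤ v (f^[n] y) ∧ B ≤ v (f^[n] y) := by
    intro y hy n
    induction n with
    | zero => constructor <;> simpa using hy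
    | succ n ih =>
      have h1 := hstep _ ih.2
      rw [Function.iterate_succ_apply']
      have hb1 : 1 ≤ v (f^[n] y) := le_trans hB1.le ih.2
      constructor
      · calc B ^ (n + 1) * v y = B * (B ^ n * v y) := by ring
          _ ≤ B * v (f^[n] y) := mul_le_mul_of_nonneg_left ih.1 hB0.le
          _ ≤ v (f (f^[n] y)) := h1
      · calc B ≤ B * v (f^[n] y) := le_mul_of_one_le_right hB0.le hb1
          _ ≤ v (f (f^[n] y)) := h1
  -- preperiodic ⇒ small "low part"
  have hstar : ∀ x : K, x ∈ k → (∃ m' n : ℕ, 1 ≤ n ∧ f^[m' + n] x = f^[m'] x) →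
      v (∑ j ∈ Finset.range (m + 1), a j * x ^ j) < B := by
    intro x hx hpp
    by_contra hge
    push_neg at hge
    have hsplit : f x = (x ^ d + ∑ i ∈ Finset.Ico (m + 1) (d - 1), a i * x ^ i)
        + ∑ j ∈ Finset.range (m + 1), a j * x ^ j := by
      rw [hf x, Finset.range_eq_Ico,
        ← Finset.sum_Ico_consecutive (fun i => a i * x ^ i) (Nat.zero_le (m + 1))
          (show m + 1 ≤ d - 1 by omega)]
      rw [← Finset.range_eq_Ico]
      ring
    have hpk : (x ^ d + ∑ i ∈ Finset.Ico (m + 1) (d - 1), a i * x ^ i) ∈ k := by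
      refine Subfield.add_mem k (Subfield.pow_mem k hx d) (Subfield.sum_mem k ?_)
      intro i hi
      obtain ⟨h1, h2⟩ := Finset.mem_Ico.mp hi
      exact Subfield.mul_mem k (hak i (by omega) (by omega)) (Subfield.pow_mem k hx i)
    have hvf : v (f x) = v (∑ j ∈ Finset.range (m + 1), a j * x ^ j) := by
      rw [hsplit, add_comm]
      exact na_dom v hna (lt_of_le_of_lt (hkle _ hpk) (lt_of_lt_of_le hB1 hge))
    have hBfx : B ≤ v (f x) := by rw [hvf]; exact hge
    obtain ⟨m', n, hn1, heq⟩ := hpp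
    have hper : ∀ t : ℕ, f^[m' + t * n] x = f^[m'] x := by
      intro t
      induction t with
      | zero => simp
      | succ t iht =>
        have he : m' + (t + 1) * n = n + (m' + t * n) := by ring
        rw [he, Function.iterate_add_apply, iht, ← Function.iterate_add_apply]
        rw [show n + m' = m' + n by ring, heq]
    obtain ⟨N, hN⟩ := pow_unbounded_of_one_lt (v (f^[m'] x)) hB1
    have hnn : N + 1 ≤ (N + 1) * n := Nat.le_mul_of_pos_right (N + 1) hn1
    set s := m' + (N + 1) * n - 1 with hs
    have hs1 : s + 1 = m' + (N + 1) * n := by omega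
    have h1 : f^[m' + (N + 1) * n] x = f^[s] (f x) := by
      rw [← hs1, Function.iterate_succ_apply]
    have h2 : B ^ s * v (f x) ≤ v (f^[s] (f x)) := (hiter (f x) hBfx s).1
    rw [← h1, hper (N + 1)] at h2
    have h3 : B ^ N ≤ B ^ s := pow_le_pow_right₀ hB1.le (by omega)
    have h4 : B ^ s ≤ B ^ s * v (f x) :=
      le_mul_of_one_le_right (pow_nonneg hB0.le s) (le_trans hB1.le hBfx)
    have : v (f^[m'] x) < v (f^[m'] x) :=
      lt_of_lt_of_le hN (le_trans h3 (le_trans h4 h2))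
    exact lt_irrefl _ this
  -- counting
  set P := {x : K | x ∈ k ∧ ∃ m' n : ℕ, 1 ≤ n ∧ f^[m' + n] x = f^[m'] x} with hP
  have hcard : ∀ S : Finset K, ↑S ⊆ P → S.card ≤ m := by
    intro S hS
    by_contra hSc
    push_neg at hSc
    obtain ⟨T, hTS, hTcard⟩ := Finset.exists_subset_card_eq (show m + 1 ≤ S.card by omega)
    set c : Fin (m + 1) → K := fun i => (T.equivFin.symm (Fin.cast hTcard.symm i) : K) with hc
    have hcmem : ∀ i, c i ∈ T := fun i => (T.equivFin.symm _).2
    have hcP : ∀ i, c i ∈ P := fun i => hS (hTS (hcmem i))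
    have hcink : ∀ i, c i ∈ k := fun i => (hcP i).1
    have hcsmall : ∀ i, v (∑ j ∈ Finset.range (m + 1), a j * c i ^ j) < B := fun i =>
      hstar _ (hcP i).1 (hcP i).2
    have hcinj : Function.Injective c := by
      intro i j h
      have h2 := T.equivFin.symm.injective (Subtype.ext h)
      exact Fin.ext (by simpa using congrArg Fin.val h2)
    have hune : (Finset.univ : Finset (Fin (m + 1))).Nonempty := Finset.univ_nonempty
    set t : ℝ := Finset.univ.sup' hune
      (fun i : Fin (m + 1) => v (∑ j ∈ Finset.range (m + 1), a j * c i ^ j)) with htdef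
    have htB : t < B := (Finset.sup'_lt_iff hune).mpr fun i _ => hcsmall i
    have hle : ∀ i, v (∑ j ∈ Finset.range (m + 1), a j * c i ^ j) ≤ t := by
      intro i
      rw [htdef]
      exact Finset.le_sup'
        (fun i : Fin (m + 1) => v (∑ j ∈ Finset.range (m + 1), a j * c i ^ j))
        (Finset.mem_univ i)
    have hvle := interp v hna k hk m a c hcink hcinj (max 1 t) (le_max_left _ _)
      (fun i => le_trans (hle i) (le_max_right 1 t))
      j₁ hj₁m
    rw [← hj₁] at hvle
    have : max 1 t < B := max_lt hB1 htB
    linarith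
  have hfin : P.Finite := by
    by_contra hInf
    obtain ⟨S, hSP, hScard⟩ := Set.Infinite.exists_subset_card_eq hInf (m + 1)
    have := hcard S hSP
    omega
  refine ⟨hfin, ?_⟩
  rw [Set.ncard_eq_toFinset_card P hfin]
  exact hcard hfin.toFinset (by simp [Set.Finite.coe_toFinset])
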